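/- (Example 2, η-Ricci soliton.) In the setting of the 3-dimensional Lie algebra on ℝ³ with standard inner product, bracket [e₀,e₁] = p·e₁, [e₀,e₂] = p·e₂, [e₁,e₂] = 0 (p ∈ ℝ), Koszul product ∇, curvature R, Ricci form ρ(x,y) = Σᵢ₌₀² ⟪R(eᵢ,x)y, eᵢ⟫, ξ = e₀, η = ⟪·,e₀⟫, and Lie derivative (L_ξ g)(x,y) = −⟪[e₀,x], y⟫ − ⟪x, [e₀,y]⟫: the equation ρ(x,y) = −½(L_ξ g)(x,y) − λ⟪x,y⟫ − ν·η(x)η(y) holds for all x, y with constants (λ, ν) = (p + 2p², −p); i.e. the manifold admits an η-Ricci soliton with potential ξ and constants (λ, μ, ν) = (p + 2p², 0, −p). -/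

import Mathlib

open RealInnerProductSpace

/-- The standard basis of ℝ³ (as a Euclidean space). -/
noncomputable def e3 (i : Fin 3) : EuclideanSpace ℝ (Fin 3) :=
  EuclideanSpace.single i 1

lemma e3_inner_right (v : EuclideanSpace ℝ (Fin 3)) (k : Fin 3) : ⟪v, e3 k⟫ = v k := by
  simp [e3, EuclideanSpace.inner_single_right]

lemma e3_inner (i j : Fin 3) : ⟪e3 i, e3 j⟫ = if i = j then (1:ℝ) else 0 := by
  rw [e3_inner_right]; simp [e3, EuclideanSpace.single_apply, eq_comm]

lemma e3_ext (v w : EuclideanSpace ℝ (Fin 3)) (h0 : ⟪v, e3 0⟫ = ⟪w, e3 0⟫)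
    (h1 : ⟪v, e3 1⟫ = ⟪w, e3 1⟫) (h2 : ⟪v, e3 2⟫ = ⟪w, e3 2⟫) : v = w := by
  ext k
  fin_cases k
  · rw [e3_inner_right, e3_inner_right] at h0; exact h0
  · rw [e3_inner_right, e3_inner_right] at h1; exact h1
  · rw [e3_inner_right, e3_inner_right] at h2; exact h2

lemma e3_decomp (v : EuclideanSpace ℝ (Fin 3)) :
    ∃ a b c : ℝ, v = a • e3 0 + b • e3 1 + c • e3 2 := by
  refine ⟨v 0, v 1, v 2, ?_⟩
  ext k
  fin_cases k <;> simp [e3, EuclideanSpace.single_apply]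

set_option maxHeartbeats 2000000 in
/-- Example 2, η-Ricci soliton: for the 3-dimensional Lie group with
bracket [e₀,e₁] = p·e₁, [e₀,e₂] = p·e₂, [e₁,e₂] = 0, the equation
ρ(x,y) = −½(L_ξ g)(x,y) − λ⟪x,y⟫ − ν·η(x)η(y) holds with
(λ,ν) = (p + 2p², −p), where ξ = e₀, η = ⟪·,e₀⟫ and
(L_ξ g)(x,y) = −⟪[e₀,x],y⟫ − ⟪x,[e₀,y]⟫; i.e. the manifold admits an η-Ricci
soliton with potential ξ and constants (λ,μ,ν) = (p + 2p², 0, −p). -/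
theorem stmt_18 (p : ℝ)
    (B : EuclideanSpace ℝ (Fin 3) →ₗ[ℝ] EuclideanSpace ℝ (Fin 3) →ₗ[ℝ] EuclideanSpace ℝ (Fin 3))
    (hanti : ∀ x y : EuclideanSpace ℝ (Fin 3), B x y = -B y x)
    (h01 : B (e3 0) (e3 1) = p • e3 1)
    (h02 : B (e3 0) (e3 2) = p • e3 2)
    (h12 : B (e3 1) (e3 2) = 0)
    (nab : EuclideanSpace ℝ (Fin 3) →ₗ[ℝ] EuclideanSpace ℝ (Fin 3) →ₗ[ℝ] EuclideanSpace ℝ (Fin 3))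
    (hKoszul : ∀ x y z : EuclideanSpace ℝ (Fin 3),
      2 * ⟪nab x y, z⟫ = ⟪B x y, z⟫ - ⟪B y z, x⟫ + ⟪B z x, y⟫)
    (R : EuclideanSpace ℝ (Fin 3) → EuclideanSpace ℝ (Fin 3) →
      EuclideanSpace ℝ (Fin 3) → EuclideanSpace ℝ (Fin 3))
    (hR : ∀ x y z : EuclideanSpace ℝ (Fin 3),
      R x y z = nab x (nab y z) - nab y (nab x z) - nab (B x y) z)
    (ρ : EuclideanSpace ℝ (Fin 3) → EuclideanSpace ℝ (Fin 3) → ℝ)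
    (hρ : ∀ x y : EuclideanSpace ℝ (Fin 3), ρ x y = ∑ i : Fin 3, ⟪R (e3 i) x y, e3 i⟫)
    (Lg : EuclideanSpace ℝ (Fin 3) → EuclideanSpace ℝ (Fin 3) → ℝ)
    (hLg : ∀ x y : EuclideanSpace ℝ (Fin 3),
      Lg x y = -⟪B (e3 0) x, y⟫ - ⟪x, B (e3 0) y⟫) :
    ∀ x y : EuclideanSpace ℝ (Fin 3),
      ρ x y = -(1 / 2) * Lg x y - (p + 2 * p ^ 2) * ⟪x, y⟫
        - (-p) * (⟪x, e3 0⟫ * ⟪y, e3 0⟫) := by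
  have hdiag : ∀ v : EuclideanSpace ℝ (Fin 3), B v v = 0 := by
    intro v
    have h := hanti v v
    have h3 : (2:ℝ) • B v v = 0 := by rw [two_smul]; nth_rewrite 2 [h]; simp
    simpa using (smul_eq_zero.mp h3).resolve_left (by norm_num)
  have B00 := hdiag (e3 0)
  have B11 := hdiag (e3 1)
  have B22 := hdiag (e3 2)
  have B10 : B (e3 1) (e3 0) = -(p • e3 1) := by rw [hanti, h01]
  have B20 : B (e3 2) (e3 0) = -(p • e3 2) := by rw [hanti, h02]
  have B21 : B (e3 2) (e3 1) = 0 := by rw [hanti, h12]; simp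
  have n00 : nab (e3 0) (e3 0) = 0 := by
    refine e3_ext _ _ ?_ ?_ ?_ <;>
    [have h := hKoszul (e3 0) (e3 0) (e3 0);
     have h := hKoszul (e3 0) (e3 0) (e3 1);
     have h := hKoszul (e3 0) (e3 0) (e3 2)] <;>
    · simp only [B00, B11, B22, h01, h02, h12, B10, B20, B21,
        inner_zero_left, inner_zero_right, real_inner_smul_left, real_inner_smul_right,
        inner_neg_left, inner_neg_right, e3_inner, Fin.reduceEq, reduceIte,
        mul_one, mul_zero, neg_zero, sub_zero, add_zero, zero_add, zero_sub, neg_neg,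
        sub_self, if_true] at h ⊢
      linarith
  have n01 : nab (e3 0) (e3 1) = 0 := by
    refine e3_ext _ _ ?_ ?_ ?_ <;>
    [have h := hKoszul (e3 0) (e3 1) (e3 0);
     have h := hKoszul (e3 0) (e3 1) (e3 1);
     have h := hKoszul (e3 0) (e3 1) (e3 2)] <;>
    · simp only [B00, B11, B22, h01, h02, h12, B10, B20, B21,
        inner_zero_left, inner_zero_right, real_inner_smul_left, real_inner_smul_right,
        inner_neg_left, inner_neg_right, e3_inner, Fin.reduceEq, reduceIte,
        mul_one, mul_zero, neg_zero, sub_zero, add_zero, zero_add, zero_sub, neg_neg,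
        sub_self, if_true] at h ⊢
      linarith
  have n02 : nab (e3 0) (e3 2) = 0 := by
    refine e3_ext _ _ ?_ ?_ ?_ <;>
    [have h := hKoszul (e3 0) (e3 2) (e3 0);
     have h := hKoszul (e3 0) (e3 2) (e3 1);
     have h := hKoszul (e3 0) (e3 2) (e3 2)] <;>
    · simp only [B00, B11, B22, h01, h02, h12, B10, B20, B21,
        inner_zero_left, inner_zero_right, real_inner_smul_left, real_inner_smul_right,
        inner_neg_left, inner_neg_right, e3_inner, Fin.reduceEq, reduceIte,
        mul_one, mul_zero, neg_zero, sub_zero, add_zero, zero_add, zero_sub, neg_neg,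
        sub_self, if_true] at h ⊢
      linarith
  have n10 : nab (e3 1) (e3 0) = -(p • e3 1) := by
    refine e3_ext _ _ ?_ ?_ ?_ <;>
    [have h := hKoszul (e3 1) (e3 0) (e3 0);
     have h := hKoszul (e3 1) (e3 0) (e3 1);
     have h := hKoszul (e3 1) (e3 0) (e3 2)] <;>
    · simp only [B00, B11, B22, h01, h02, h12, B10, B20, B21,
        inner_zero_left, inner_zero_right, real_inner_smul_left, real_inner_smul_right,
        inner_neg_left, inner_neg_right, e3_inner, Fin.reduceEq, reduceIte,
        mul_one, mul_zero, neg_zero, sub_zero, add_zero, zero_add, zero_sub, neg_neg,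
        sub_self, if_true] at h ⊢
      linarith
  have n11 : nab (e3 1) (e3 1) = p • e3 0 := by
    refine e3_ext _ _ ?_ ?_ ?_ <;>
    [have h := hKoszul (e3 1) (e3 1) (e3 0);
     have h := hKoszul (e3 1) (e3 1) (e3 1);
     have h := hKoszul (e3 1) (e3 1) (e3 2)] <;>
    · simp only [B00, B11, B22, h01, h02, h12, B10, B20, B21,
        inner_zero_left, inner_zero_right, real_inner_smul_left, real_inner_smul_right,
        inner_neg_left, inner_neg_right, e3_inner, Fin.reduceEq, reduceIte,
        mul_one, mul_zero, neg_zero, sub_zero, add_zero, zero_add, zero_sub, neg_neg,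
        sub_self, if_true] at h ⊢
      linarith
  have n12 : nab (e3 1) (e3 2) = 0 := by
    refine e3_ext _ _ ?_ ?_ ?_ <;>
    [have h := hKoszul (e3 1) (e3 2) (e3 0);
     have h := hKoszul (e3 1) (e3 2) (e3 1);
     have h := hKoszul (e3 1) (e3 2) (e3 2)] <;>
    · simp only [B00, B11, B22, h01, h02, h12, B10, B20, B21,
        inner_zero_left, inner_zero_right, real_inner_smul_left, real_inner_smul_right,
        inner_neg_left, inner_neg_right, e3_inner, Fin.reduceEq, reduceIte,
        mul_one, mul_zero, neg_zero, sub_zero, add_zero, zero_add, zero_sub, neg_neg,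
        sub_self, if_true] at h ⊢
      linarith
  have n20 : nab (e3 2) (e3 0) = -(p • e3 2) := by
    refine e3_ext _ _ ?_ ?_ ?_ <;>
    [have h := hKoszul (e3 2) (e3 0) (e3 0);
     have h := hKoszul (e3 2) (e3 0) (e3 1);
     have h := hKoszul (e3 2) (e3 0) (e3 2)] <;>
    · simp only [B00, B11, B22, h01, h02, h12, B10, B20, B21,
        inner_zero_left, inner_zero_right, real_inner_smul_left, real_inner_smul_right,
        inner_neg_left, inner_neg_right, e3_inner, Fin.reduceEq, reduceIte,
        mul_one, mul_zero, neg_zero, sub_zero, add_zero, zero_add, zero_sub, neg_neg,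
        sub_self, if_true] at h ⊢
      linarith
  have n21 : nab (e3 2) (e3 1) = 0 := by
    refine e3_ext _ _ ?_ ?_ ?_ <;>
    [have h := hKoszul (e3 2) (e3 1) (e3 0);
     have h := hKoszul (e3 2) (e3 1) (e3 1);
     have h := hKoszul (e3 2) (e3 1) (e3 2)] <;>
    · simp only [B00, B11, B22, h01, h02, h12, B10, B20, B21,
        inner_zero_left, inner_zero_right, real_inner_smul_left, real_inner_smul_right,
        inner_neg_left, inner_neg_right, e3_inner, Fin.reduceEq, reduceIte,
        mul_one, mul_zero, neg_zero, sub_zero, add_zero, zero_add, zero_sub, neg_neg,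
        sub_self, if_true] at h ⊢
      linarith
  have n22 : nab (e3 2) (e3 2) = p • e3 0 := by
    refine e3_ext _ _ ?_ ?_ ?_ <;>
    [have h := hKoszul (e3 2) (e3 2) (e3 0);
     have h := hKoszul (e3 2) (e3 2) (e3 1);
     have h := hKoszul (e3 2) (e3 2) (e3 2)] <;>
    · simp only [B00, B11, B22, h01, h02, h12, B10, B20, B21,
        inner_zero_left, inner_zero_right, real_inner_smul_left, real_inner_smul_right,
        inner_neg_left, inner_neg_right, e3_inner, Fin.reduceEq, reduceIte,
        mul_one, mul_zero, neg_zero, sub_zero, add_zero, zero_add, zero_sub, neg_neg,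
        sub_self, if_true] at h ⊢
      linarith
  intro x y
  obtain ⟨a, b, c, rfl⟩ := e3_decomp x
  obtain ⟨d, e, f, rfl⟩ := e3_decomp y
  rw [hρ, hLg, Fin.sum_univ_three, hR, hR, hR]
  simp only [map_add, map_smul, map_neg, map_sub, map_zero,
    LinearMap.add_apply, LinearMap.smul_apply, LinearMap.neg_apply, LinearMap.sub_apply,
    LinearMap.zero_apply,
    B00, B11, B22, h01, h02, h12, B10, B20, B21,
    n00, n01, n02, n10, n11, n12, n20, n21, n22,
    smul_add, smul_neg, smul_smul, smul_zero, zero_smul, neg_zero, add_zero, zero_add,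
    neg_neg, neg_add_rev,
    inner_add_left, inner_add_right, inner_sub_left, inner_sub_right,
    inner_neg_left, inner_neg_right, real_inner_smul_left, real_inner_smul_right,
    inner_zero_left, inner_zero_right, e3_inner, Fin.reduceEq, reduceIte,
    mul_one, mul_zero]
  ring
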